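/- Let N ≥ 1 and suppose v satisfies the fixed point equation v = λ T_f v with T_f v(r) = ∫_r^1 (∫_0^s N τ^{N-1} f(v(τ)) dτ)^{1/N} ds, where f is continuous and |f(s)| ≤ M |s|^N for all s ≠ 0 with some M > 0. If v ≢ 0 then ‖v‖_∞ ≤ M^{1/N} λ ‖v‖_∞, hence λ ≥ M^{-1/N}. -/

import Mathlib

open Set

/-- Nonexistence of one-sign solutions for small `λ`: a nontrivial fixed point
`v = λ T_f v` with `|f(s)| ≤ M|s|^N` forces `‖v‖_∞ ≤ M^{1/N} λ ‖v‖_∞`, hence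
`λ ≥ M^{-1/N}`. -/
theorem stmt_18 (N : ℕ) (hN : 1 ≤ N) (lam : ℝ) (hlam : 0 < lam)
    (f : ℝ → ℝ) (hf : Continuous f) (M : ℝ) (hM : 0 < M)
    (hbound : ∀ s : ℝ, s ≠ 0 → |f s| ≤ M * |s| ^ N)
    (v : ℝ → ℝ) (hvc : ContinuousOn v (Icc (0:ℝ) 1))
    (hfix : ∀ r ∈ Icc (0:ℝ) 1,
      v r = lam * ∫ s in r..(1:ℝ),
        (∫ τ in (0:ℝ)..s, (N:ℝ) * τ ^ (N - 1) * f (v τ)) ^ ((1:ℝ) / N))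
    (hnontriv : ∃ r ∈ Icc (0:ℝ) 1, v r ≠ 0) :
    sSup ((fun r => |v r|) '' Icc (0:ℝ) 1) ≤
        M ^ ((1:ℝ) / N) * lam * sSup ((fun r => |v r|) '' Icc (0:ℝ) 1) ∧
      M ^ (-(1:ℝ) / N) ≤ lam := by
  set K := sSup ((fun r => |v r|) '' Icc (0:ℝ) 1) with hKdef
  have hN0 : N ≠ 0 := by omega
  have hNpos : (0:ℝ) < N := by exact_mod_cast Nat.pos_of_ne_zero hN0
  -- f 0 = 0
  have hf0 : f 0 = 0 := by
    have h1 : Filter.Tendsto f (nhdsWithin (0:ℝ) {0}ᶜ) (nhds (f 0)) :=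
      (hf.tendsto 0).mono_left nhdsWithin_le_nhds
    have h2 : Filter.Tendsto f (nhdsWithin (0:ℝ) {0}ᶜ) (nhds 0) := by
      refine squeeze_zero_norm' (a := fun s => M * |s| ^ N) ?_ ?_
      · filter_upwards [self_mem_nhdsWithin] with s hs
        exact hbound s hs
      · have : Filter.Tendsto (fun s : ℝ => M * |s| ^ N) (nhds 0) (nhds (M * |(0:ℝ)| ^ N)) := by
          exact (continuous_const.mul ((continuous_abs).pow N)).tendsto 0
        simp only [abs_zero, zero_pow hN0, mul_zero] at this
        exact this.mono_left nhdsWithin_le_nhds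
    exact tendsto_nhds_unique h1 h2
  have habs : ∀ s : ℝ, |f s| ≤ M * |s| ^ N := by
    intro s
    by_cases h : s = 0
    · simp [h, hf0, zero_pow hN0]
    · exact hbound s h
  have hbdd : BddAbove ((fun r => |v r|) '' Icc (0:ℝ) 1) :=
    (isCompact_Icc.image_of_continuousOn hvc.abs).bddAbove
  have hKmem : ∀ r ∈ Icc (0:ℝ) 1, |v r| ≤ K := fun r hr =>
    le_csSup hbdd (mem_image_of_mem _ hr)
  have hK0 : 0 < K := by
    obtain ⟨r0, hr0, h0⟩ := hnontriv
    exact lt_of_lt_of_le (abs_pos.mpr h0) (hKmem r0 hr0)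
  -- the key rpow identity
  have hMK : (M * K ^ N) ^ ((1:ℝ)/N) = M ^ ((1:ℝ)/N) * K := by
    rw [Real.mul_rpow hM.le (by positivity), ← Real.rpow_natCast K N,
      ← Real.rpow_mul hK0.le, mul_one_div, div_self (ne_of_gt hNpos), Real.rpow_one]
  -- main pointwise bound
  have hmain : ∀ r ∈ Icc (0:ℝ) 1, |v r| ≤ lam * (M ^ ((1:ℝ)/N) * K) := by
    intro r hr
    rw [hfix r hr, abs_mul, abs_of_pos hlam]
    have hle : ‖∫ s in r..(1:ℝ),
        (∫ τ in (0:ℝ)..s, (N:ℝ) * τ ^ (N - 1) * f (v τ)) ^ ((1:ℝ)/N)‖ ≤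
        (M ^ ((1:ℝ)/N) * K) * |1 - r| := by
      apply intervalIntegral.norm_integral_le_of_norm_le_const
      intro s hs
      rw [Set.uIoc_of_le hr.2] at hs
      have hs0 : 0 < s := lt_of_le_of_lt hr.1 hs.1
      have hs1 : s ≤ 1 := hs.2
      -- bound the inner integral
      have hinner : |∫ τ in (0:ℝ)..s, (N:ℝ) * τ ^ (N - 1) * f (v τ)| ≤ M * K ^ N := by
        have hbnd : ‖∫ τ in (0:ℝ)..s, (N:ℝ) * τ ^ (N - 1) * f (v τ)‖ ≤
            |∫ τ in (0:ℝ)..s, (N:ℝ) * τ ^ (N - 1) * (M * K ^ N)| := by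
          apply intervalIntegral.norm_integral_le_abs_of_norm_le
          · apply MeasureTheory.ae_restrict_of_forall_mem measurableSet_uIoc
            intro τ hτ
            rw [Set.uIoc_of_le hs0.le] at hτ
            have hτ01 : τ ∈ Icc (0:ℝ) 1 := ⟨hτ.1.le, hτ.2.trans hs1⟩
            have h1 : |f (v τ)| ≤ M * K ^ N := by
              calc |f (v τ)| ≤ M * |v τ| ^ N := habs (v τ)
                _ ≤ M * K ^ N :=
                    mul_le_mul_of_nonneg_left
                      (pow_le_pow_left₀ (abs_nonneg _) (hKmem τ hτ01) N) hM.le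
            calc ‖(N:ℝ) * τ ^ (N - 1) * f (v τ)‖
                = (N:ℝ) * τ ^ (N - 1) * |f (v τ)| := by
                  rw [Real.norm_eq_abs, abs_mul,
                    abs_of_nonneg (mul_nonneg (Nat.cast_nonneg _) (pow_nonneg hτ.1.le _))]
              _ ≤ (N:ℝ) * τ ^ (N - 1) * (M * K ^ N) :=
                  mul_le_mul_of_nonneg_left h1
                    (mul_nonneg (Nat.cast_nonneg _) (pow_nonneg hτ.1.le _))
          · exact (Continuous.intervalIntegrable (by continuity) 0 s)
        have hcalc : ∫ τ in (0:ℝ)..s, (N:ℝ) * τ ^ (N - 1) * (M * K ^ N) =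
            M * K ^ N * s ^ N := by
          have : ∀ τ : ℝ, (N:ℝ) * τ ^ (N - 1) * (M * K ^ N) =
              (M * K ^ N * N) * τ ^ (N - 1) := by intro τ; ring
          simp_rw [this]
          rw [intervalIntegral.integral_const_mul, integral_pow]
          rw [Nat.sub_add_cancel hN, zero_pow hN0]
          field_simp
          rw [Nat.cast_sub hN, Nat.cast_one]; ring
        rw [Real.norm_eq_abs] at hbnd
        refine hbnd.trans ?_
        rw [hcalc, abs_of_nonneg (by positivity)]
        calc M * K ^ N * s ^ N ≤ M * K ^ N * 1 := by
              apply mul_le_mul_of_nonneg_left _ (by positivity)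
              exact pow_le_one₀ hs0.le hs1
          _ = M * K ^ N := mul_one _
      -- bound the rpow
      calc ‖(∫ τ in (0:ℝ)..s, (N:ℝ) * τ ^ (N - 1) * f (v τ)) ^ ((1:ℝ)/N)‖
          ≤ |∫ τ in (0:ℝ)..s, (N:ℝ) * τ ^ (N - 1) * f (v τ)| ^ ((1:ℝ)/N) := by
            rw [Real.norm_eq_abs]; exact Real.abs_rpow_le_abs_rpow _ _
        _ ≤ (M * K ^ N) ^ ((1:ℝ)/N) := by
            apply Real.rpow_le_rpow (abs_nonneg _) hinner (by positivity)
        _ = M ^ ((1:ℝ)/N) * K := hMK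
    calc lam * |∫ s in r..(1:ℝ),
        (∫ τ in (0:ℝ)..s, (N:ℝ) * τ ^ (N - 1) * f (v τ)) ^ ((1:ℝ)/N)|
        ≤ lam * ((M ^ ((1:ℝ)/N) * K) * |1 - r|) := by
          apply mul_le_mul_of_nonneg_left _ hlam.le
          rw [← Real.norm_eq_abs]; exact hle
      _ ≤ lam * (M ^ ((1:ℝ)/N) * K) := by
          apply mul_le_mul_of_nonneg_left _ hlam.le
          have : |1 - r| ≤ 1 := by
            rw [abs_of_nonneg (by linarith [hr.2])]
            linarith [hr.1]
          calc (M ^ ((1:ℝ)/N) * K) * |1 - r| ≤ (M ^ ((1:ℝ)/N) * K) * 1 := by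
                apply mul_le_mul_of_nonneg_left this (by positivity)
            _ = M ^ ((1:ℝ)/N) * K := mul_one _
  -- first conclusion
  have hfirst : K ≤ M ^ ((1:ℝ)/N) * lam * K := by
    apply csSup_le ((nonempty_Icc.mpr zero_le_one).image _)
    rintro x ⟨r, hr, rfl⟩
    calc |v r| ≤ lam * (M ^ ((1:ℝ)/N) * K) := hmain r hr
      _ = M ^ ((1:ℝ)/N) * lam * K := by ring
  refine ⟨hfirst, ?_⟩
  -- second conclusion
  have hMp : 0 < M ^ ((1:ℝ)/N) := Real.rpow_pos_of_pos hM _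
  have h1 : 1 ≤ M ^ ((1:ℝ)/N) * lam := by
    by_contra h
    push_neg at h
    nlinarith
  rw [neg_div, Real.rpow_neg hM.le]
  rw [inv_le_iff_one_le_mul₀ hMp]
  linarith [h1]
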